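/- Let u∥(x) = Σⱼ αⱼ (e⊥ × (nⱼ/λ)) e^{i nⱼ·x} be as above (all frequencies nⱼ on a circle of radius λ in the plane P with unit normal e⊥), and let ω(x) = Σⱼ i αⱼ e^{i nⱼ·x} be the scalar function with ∇ × u∥ = λ ω e⊥. Then for every positive integer q, (u∥(x) · ∇)(ω(x)^q) = 0 for all x ∈ ℝ³. -/

import Mathlib

open scoped Classical

noncomputable section

abbrev V3 := Fin 3 → ℝ
abbrev C3 := Fin 3 → ℂ

/-- Canonical inclusion of real vectors into `ℂ³`. -/
def toC (v : V3) : C3 := fun i => (v i : ℂ)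

/-- Real dot product. -/
def dotR (u v : V3) : ℝ := ∑ i, u i * v i

/-- ℂ-bilinear dot product on `ℂ³`. -/
def dotC (u v : C3) : ℂ := ∑ i, u i * v i

/-- Euclidean norm of a vector of `ℝ³`. -/
def norm3 (v : V3) : ℝ := Real.sqrt (dotR v v)

/-- Cross product on `ℝ³`. -/
def crossR (u v : V3) : V3 :=
  ![u 1 * v 2 - u 2 * v 1, u 2 * v 0 - u 0 * v 2, u 0 * v 1 - u 1 * v 0]

/-- ℂ-bilinear cross product on `ℂ³`. -/
def crossC (u v : C3) : C3 :=
  ![u 1 * v 2 - u 2 * v 1, u 2 * v 0 - u 0 * v 2, u 0 * v 1 - u 1 * v 0]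

/-- Orthogonal projection of `ℂ³` onto `{v : m · v = 0}` (for a real frequency `m`). -/
def projC (m : V3) (v : C3) : C3 :=
  v - (dotC (toC m) v / ((dotR m m : ℝ) : ℂ)) • toC m

/-- Rodrigues rotation formula (unit axis `a`, cosine `c`, sine `s`). -/
def rodriguesR (a : V3) (c s : ℝ) (v : V3) : V3 :=
  c • v + s • crossR a v + ((1 - c) * dotR a v) • a

/-- Complexified Rodrigues rotation formula; since the coefficients are real this acts on the
real and imaginary parts separately. -/
def rodriguesC (a : C3) (c s : ℂ) (v : C3) : C3 :=
  c • v + s • crossC a v + ((1 - c) * dotC a v) • a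

/-- The rotation `R_{ω₁ ↦ ω₂}` around the axis `ω₁ × ω₂` by the angle `θ ∈ (0,π)` with
`cos θ = ω₁ · ω₂` (for unit vectors `ω₁ ≠ ±ω₂`, so that `sin θ = |ω₁ × ω₂|`). -/
def geoRot (ω₁ ω₂ : V3) (v : V3) : V3 :=
  rodriguesR ((norm3 (crossR ω₁ ω₂))⁻¹ • crossR ω₁ ω₂) (dotR ω₁ ω₂) (norm3 (crossR ω₁ ω₂)) v

/-- The rotation `R_{ω₁ ↦ ω₂}` extended complex-linearly to `ℂ³`. -/
def geoRotC (ω₁ ω₂ : V3) (v : C3) : C3 :=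
  rodriguesC (toC ((norm3 (crossR ω₁ ω₂))⁻¹ • crossR ω₁ ω₂)) ((dotR ω₁ ω₂ : ℝ) : ℂ)
    ((norm3 (crossR ω₁ ω₂) : ℝ) : ℂ) v

/-- Rotation around the unit axis `a` by the angle `α`, extended complex-linearly to `ℂ³`. -/
def axisRotC (a : V3) (α : ℝ) (v : C3) : C3 :=
  rodriguesC (toC a) ((Real.cos α : ℝ) : ℂ) ((Real.sin α : ℝ) : ℂ) v

/-- `e∥(n) = e⊥ × (n/|n|)`. -/
def ePar (ePerp : V3) (n : V3) : V3 := crossR ePerp ((norm3 n)⁻¹ • n)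

/-- Partial derivative of a real-valued function on `ℝ³`. -/
def pderivR (f : V3 → ℝ) (i : Fin 3) (x : V3) : ℝ := fderiv ℝ f x (Pi.single i 1)

/-- Partial derivative of a complex-valued function on `ℝ³`. -/
def pderivC (f : V3 → ℂ) (i : Fin 3) (x : V3) : ℂ := fderiv ℝ f x (Pi.single i 1)

/-- Curl of a real vector field on `ℝ³`. -/
def curlR (u : V3 → V3) (x : V3) : V3 :=
  ![pderivR (fun y => u y 2) 1 x - pderivR (fun y => u y 1) 2 x,
    pderivR (fun y => u y 0) 2 x - pderivR (fun y => u y 2) 0 x,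
    pderivR (fun y => u y 1) 0 x - pderivR (fun y => u y 0) 1 x]

/-- Curl of a complex vector field on `ℝ³`. -/
def curlC (u : V3 → C3) (x : V3) : C3 :=
  ![pderivC (fun y => u y 2) 1 x - pderivC (fun y => u y 1) 2 x,
    pderivC (fun y => u y 0) 2 x - pderivC (fun y => u y 2) 0 x,
    pderivC (fun y => u y 1) 0 x - pderivC (fun y => u y 0) 1 x]

/-- Real and imaginary parts of a complex vector, as real vectors. -/
def reV (u : C3) : V3 := fun i => (u i).re
def imV (u : C3) : V3 := fun i => (u i).im

def dotCLM (m : V3) : V3 →L[ℝ] ℝ := ∑ i, m i • ContinuousLinearMap.proj i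

lemma dotCLM_apply (m v : V3) : dotCLM m v = dotR m v := by
  simp [dotCLM, dotR, ContinuousLinearMap.sum_apply]

lemma dotCLM_single (m : V3) (k : Fin 3) : dotCLM m (Pi.single k 1) = m k := by
  rw [dotCLM_apply]
  simp [dotR, Pi.single_apply, mul_ite, Finset.sum_ite_eq']

lemma hasFDerivAt_expterm (m : V3) (x : V3) :
    HasFDerivAt (fun y : V3 => Complex.exp (Complex.I * ((dotR m y : ℝ) : ℂ)))
      ((Complex.exp (Complex.I * ((dotR m x : ℝ) : ℂ))) •
        (Complex.I • (Complex.ofRealCLM.comp (dotCLM m)))) x := by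
  have h1 : HasFDerivAt (fun y : V3 => ((dotR m y : ℝ) : ℂ))
      (Complex.ofRealCLM.comp (dotCLM m)) x := by
    have := (Complex.ofRealCLM.comp (dotCLM m)).hasFDerivAt (x := x)
    refine this.congr_of_eventuallyEq (Filter.Eventually.of_forall fun y => ?_)
    simp [dotCLM_apply]
  exact (h1.const_mul _).cexp

lemma hasFDerivAt_omega (p : ℕ) (n : Fin p → V3) (α : Fin p → ℂ) (x : V3) :
    HasFDerivAt (fun y : V3 =>
        ∑ j, Complex.I * α j * Complex.exp (Complex.I * ((dotR (n j) y : ℝ) : ℂ)))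
      (∑ j, (Complex.I * α j) •
        ((Complex.exp (Complex.I * ((dotR (n j) x : ℝ) : ℂ))) •
          (Complex.I • (Complex.ofRealCLM.comp (dotCLM (n j)))))) x := by
  exact HasFDerivAt.fun_sum fun j _ => (hasFDerivAt_expterm (n j) x).const_mul _

lemma pderiv_omega_pow (p : ℕ) (n : Fin p → V3) (α : Fin p → ℂ) (q : ℕ) (k : Fin 3) (x : V3) :
    pderivC (fun y =>
        (∑ j, Complex.I * α j * Complex.exp (Complex.I * ((dotR (n j) y : ℝ) : ℂ))) ^ q) k x
    = ((q : ℂ) *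
        (∑ j, Complex.I * α j * Complex.exp (Complex.I * ((dotR (n j) x : ℝ) : ℂ))) ^ (q - 1)) *
      (∑ j, (Complex.I * α j) *
        (Complex.exp (Complex.I * ((dotR (n j) x : ℝ) : ℂ)) * (Complex.I * ((n j k : ℝ) : ℂ)))) := by
  have hω := hasFDerivAt_omega p n α x
  have hpow := (hasDerivAt_pow q
      (∑ j, Complex.I * α j * Complex.exp (Complex.I * ((dotR (n j) x : ℝ) : ℂ)))).comp_hasFDerivAt
      x hω
  have hpow2 : HasFDerivAt (fun y : V3 =>
      (∑ j, Complex.I * α j * Complex.exp (Complex.I * ((dotR (n j) y : ℝ) : ℂ))) ^ q)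
      ((((q : ℂ) *
        (∑ j, Complex.I * α j * Complex.exp (Complex.I * ((dotR (n j) x : ℝ) : ℂ))) ^ (q - 1))) •
        (∑ j, (Complex.I * α j) •
        ((Complex.exp (Complex.I * ((dotR (n j) x : ℝ) : ℂ))) •
          (Complex.I • (Complex.ofRealCLM.comp (dotCLM (n j))))))) x := hpow
  rw [pderivC, hpow2.fderiv]
  simp only [ContinuousLinearMap.coe_smul', Pi.smul_apply, ContinuousLinearMap.sum_apply,
    ContinuousLinearMap.coe_comp', Function.comp_apply, smul_eq_mul, Complex.ofRealCLM_apply,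
    dotCLM_single]

/-- With `u∥(x) = Σⱼ αⱼ (e⊥ × (nⱼ/λ)) e^{i nⱼ·x}` and
`ω(x) = Σⱼ i αⱼ e^{i nⱼ·x}` (so that `∇ × u∥ = λ ω e⊥`), one has `(u∥ · ∇)(ω^q) = 0` for every
positive integer `q` and every `x ∈ ℝ³`. -/
theorem planar_flow_annihilates_vorticity_powers
    (ePerp : V3) (hunit : norm3 ePerp = 1) (lam : ℝ) (hlam : 0 < lam)
    (p : ℕ) (n : Fin p → V3) (α : Fin p → ℂ)
    (hinj : Function.Injective n)
    (hplane : ∀ j, dotR (n j) ePerp = 0)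
    (hcirc : ∀ j, norm3 (n j) = lam) :
    ∀ q : ℕ, 0 < q → ∀ x : V3,
      ∑ k : Fin 3,
        (∑ j, α j * Complex.exp (Complex.I * ((dotR (n j) x : ℝ) : ℂ)) *
            (((crossR ePerp (lam⁻¹ • n j)) k : ℝ) : ℂ)) *
          pderivC (fun y =>
            (∑ j, Complex.I * α j * Complex.exp (Complex.I * ((dotR (n j) y : ℝ) : ℂ))) ^ q) k x
        = 0 := by
  intro q hq x
  set e : Fin p → ℂ := fun j => Complex.exp (Complex.I * ((dotR (n j) x : ℝ) : ℂ)) with he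
  set T : Fin p → Fin p → ℝ := fun j l => dotR (crossR ePerp (lam⁻¹ • n j)) (n l) with hT
  -- antisymmetry of the scalar triple product
  have hTanti : ∀ j l, T j l = -T l j := by
    intro j l
    simp only [hT, dotR, crossR, Fin.sum_univ_three, Pi.smul_apply, smul_eq_mul,
      Matrix.cons_val_zero, Matrix.cons_val_one, Matrix.head_cons,
      Matrix.cons_val_two, Matrix.tail_cons]
    ring
  -- the key vanishing double sum
  have key : (∑ j, ∑ l, (α j * e j) * (α l * e l) * ((T j l : ℝ) : ℂ)) = 0 := by
    have hswap : (∑ j, ∑ l, (α j * e j) * (α l * e l) * ((T j l : ℝ) : ℂ))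
        = -(∑ j, ∑ l, (α j * e j) * (α l * e l) * ((T j l : ℝ) : ℂ)) := by
      conv_lhs => rw [Finset.sum_comm]
      rw [← Finset.sum_neg_distrib]
      refine Finset.sum_congr rfl fun l _ => ?_
      rw [← Finset.sum_neg_distrib]
      refine Finset.sum_congr rfl fun j _ => ?_
      rw [hTanti j l]
      push_cast
      ring
    have h2 : (∑ j, ∑ l, (α j * e j) * (α l * e l) * ((T j l : ℝ) : ℂ))
        + (∑ j, ∑ l, (α j * e j) * (α l * e l) * ((T j l : ℝ) : ℂ)) = 0 := by
      linear_combination hswap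
    exact add_self_eq_zero.mp h2
  -- rewrite derivatives
  have hd : ∀ k : Fin 3,
      pderivC (fun y =>
        (∑ j, Complex.I * α j * Complex.exp (Complex.I * ((dotR (n j) y : ℝ) : ℂ))) ^ q) k x
      = ((q : ℂ) * (∑ j, Complex.I * α j * e j) ^ (q - 1)) *
        (∑ l, (Complex.I * α l) * (e l * (Complex.I * ((n l k : ℝ) : ℂ)))) :=
    fun k => pderiv_omega_pow p n α q k x
  calc ∑ k : Fin 3,
        (∑ j, α j * e j * (((crossR ePerp (lam⁻¹ • n j)) k : ℝ) : ℂ)) *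
          pderivC (fun y =>
            (∑ j, Complex.I * α j * Complex.exp (Complex.I * ((dotR (n j) y : ℝ) : ℂ))) ^ q) k x
      = ((q : ℂ) * (∑ j, Complex.I * α j * e j) ^ (q - 1)) *
        (∑ k : Fin 3, ∑ j, ∑ l,
          (α j * e j * (((crossR ePerp (lam⁻¹ • n j)) k : ℝ) : ℂ)) *
          ((Complex.I * α l) * (e l * (Complex.I * ((n l k : ℝ) : ℂ))))) := by
        rw [Finset.mul_sum]
        refine Finset.sum_congr rfl fun k _ => ?_
        rw [hd k, mul_left_comm, Finset.sum_mul_sum]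
    _ = ((q : ℂ) * (∑ j, Complex.I * α j * e j) ^ (q - 1)) *
        (∑ j, ∑ l, -((α j * e j) * (α l * e l) * ((T j l : ℝ) : ℂ))) := by
        congr 1
        rw [Finset.sum_comm]
        refine Finset.sum_congr rfl fun j _ => ?_
        rw [Finset.sum_comm]
        refine Finset.sum_congr rfl fun l _ => ?_
        simp only [hT, dotR, crossR, Fin.sum_univ_three, Pi.smul_apply, smul_eq_mul,
          Matrix.cons_val_zero, Matrix.cons_val_one, Matrix.head_cons,
          Matrix.cons_val_two, Matrix.tail_cons]
        push_cast
        have hI : Complex.I * Complex.I = -1 := Complex.I_mul_I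
        linear_combination (α j * e j * α l * e l *
          ((ePerp 1 * (lam⁻¹ * n j 2) - ePerp 2 * (lam⁻¹ * n j 1)) * n l 0 +
           (ePerp 2 * (lam⁻¹ * n j 0) - ePerp 0 * (lam⁻¹ * n j 2)) * n l 1 +
           (ePerp 0 * (lam⁻¹ * n j 1) - ePerp 1 * (lam⁻¹ * n j 0)) * n l 2)) * hI
    _ = 0 := by
        rw [show (∑ j, ∑ l, -((α j * e j) * (α l * e l) * ((T j l : ℝ) : ℂ)))
            = -(∑ j, ∑ l, (α j * e j) * (α l * e l) * ((T j l : ℝ) : ℂ)) by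
          simp [Finset.sum_neg_distrib]]
        rw [key]
        simp
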